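/- Over a 2-perfect semilocal commutative ring S (the squaring map S → S is surjective), any semiregular ternary quadratic form q on a free rank-3 module V is isometric to the standard form q¹(x₁e₁+x₂e₂+x₃e₃) = x₁x₂ + x₃²; i.e., there exists g ∈ GL(V) with q∘g⁻¹ = q¹. -/

import Mathlib

noncomputable section

open QuadraticMap

/-- The half-discriminant of a ternary quadratic form relative to a triple of vectors. -/
def halfDisc {R V : Type*} [CommRing R] [AddCommGroup V] [Module R V]
    (q : QuadraticForm R V) (f : Fin 3 → V) : R :=
  4 * q (f 0) * q (f 1) * q (f 2)
    + polar (⇑q) (f 0) (f 1) * polar (⇑q) (f 0) (f 2) * polar (⇑q) (f 1) (f 2)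
    - (q (f 0) * polar (⇑q) (f 1) (f 2) ^ 2 + q (f 1) * polar (⇑q) (f 0) (f 2) ^ 2
        + q (f 2) * polar (⇑q) (f 0) (f 1) ^ 2)

namespace SemiregAux

variable {R : Type*} [CommRing R]

/-- Coordinate polynomial for a ternary quadratic form with Gram data `a`, `b`. -/
def Qv (a0 a1 a2 b01 b02 b12 : R) (x : Fin 3 → R) : R :=
  a0 * x 0 ^ 2 + a1 * x 1 ^ 2 + a2 * x 2 ^ 2 + b01 * (x 0 * x 1) + b02 * (x 0 * x 2) +
    b12 * (x 1 * x 2)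

/-- Coordinate polynomial for the polar form. -/
def Pv (a0 a1 a2 b01 b02 b12 : R) (x y : Fin 3 → R) : R :=
  2 * a0 * (x 0 * y 0) + 2 * a1 * (x 1 * y 1) + 2 * a2 * (x 2 * y 2) +
    b01 * (x 0 * y 1 + x 1 * y 0) + b02 * (x 0 * y 2 + x 2 * y 0) + b12 * (x 1 * y 2 + x 2 * y 1)

/-- Determinant of the 3×3 matrix with columns `x`, `y`, `z`. -/
def det3 (x y z : Fin 3 → R) : R :=
  x 0 * (y 1 * z 2 - y 2 * z 1) - y 0 * (x 1 * z 2 - x 2 * z 1) + z 0 * (x 1 * y 2 - x 2 * y 1)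

/-- The half-discriminant polynomial. -/
def Dh (a0 a1 a2 b01 b02 b12 : R) : R :=
  4 * a0 * a1 * a2 + b01 * b02 * b12 - (a0 * b12 ^ 2 + a1 * b02 ^ 2 + a2 * b01 ^ 2)

section AlgebraLemmas

variable (a0 a1 a2 b01 b02 b12 : R)

theorem Pv_self (x : Fin 3 → R) :
    Pv a0 a1 a2 b01 b02 b12 x x = 2 * Qv a0 a1 a2 b01 b02 b12 x := by
  simp only [Qv, Pv]; ring

theorem Pv_comm (x y : Fin 3 → R) :
    Pv a0 a1 a2 b01 b02 b12 x y = Pv a0 a1 a2 b01 b02 b12 y x := by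
  simp only [Pv]; ring

theorem Qv_addMul (x y : Fin 3 → R) (c : R) :
    Qv a0 a1 a2 b01 b02 b12 (fun i => x i + c * y i) =
      Qv a0 a1 a2 b01 b02 b12 x + c ^ 2 * Qv a0 a1 a2 b01 b02 b12 y +
        c * Pv a0 a1 a2 b01 b02 b12 x y := by
  simp only [Qv, Pv]; ring

theorem Qv_smul1 (x : Fin 3 → R) (c : R) :
    Qv a0 a1 a2 b01 b02 b12 (fun i => c * x i) = c ^ 2 * Qv a0 a1 a2 b01 b02 b12 x := by
  simp only [Qv]; ring

theorem Qv_smul2 (x y : Fin 3 → R) (p q : R) :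
    Qv a0 a1 a2 b01 b02 b12 (fun i => p * x i + q * y i) =
      p ^ 2 * Qv a0 a1 a2 b01 b02 b12 x + q ^ 2 * Qv a0 a1 a2 b01 b02 b12 y +
        p * q * Pv a0 a1 a2 b01 b02 b12 x y := by
  simp only [Qv, Pv]; ring

theorem Qv_smul3 (x y z : Fin 3 → R) (p q r : R) :
    Qv a0 a1 a2 b01 b02 b12 (fun i => p * x i + q * y i + r * z i) =
      p ^ 2 * Qv a0 a1 a2 b01 b02 b12 x + q ^ 2 * Qv a0 a1 a2 b01 b02 b12 y +
        r ^ 2 * Qv a0 a1 a2 b01 b02 b12 z + p * q * Pv a0 a1 a2 b01 b02 b12 x y +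
        p * r * Pv a0 a1 a2 b01 b02 b12 x z + q * r * Pv a0 a1 a2 b01 b02 b12 y z := by
  simp only [Qv, Pv]; ring

theorem Pv_right_addMul (w x y : Fin 3 → R) (c : R) :
    Pv a0 a1 a2 b01 b02 b12 w (fun i => x i + c * y i) =
      Pv a0 a1 a2 b01 b02 b12 w x + c * Pv a0 a1 a2 b01 b02 b12 w y := by
  simp only [Pv]; ring

theorem Pv_right_smul1 (w x : Fin 3 → R) (c : R) :
    Pv a0 a1 a2 b01 b02 b12 w (fun i => c * x i) = c * Pv a0 a1 a2 b01 b02 b12 w x := by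
  simp only [Pv]; ring

theorem Pv_right_smul2 (w x y : Fin 3 → R) (p q : R) :
    Pv a0 a1 a2 b01 b02 b12 w (fun i => p * x i + q * y i) =
      p * Pv a0 a1 a2 b01 b02 b12 w x + q * Pv a0 a1 a2 b01 b02 b12 w y := by
  simp only [Pv]; ring

theorem Pv_right_smul3 (w x y z : Fin 3 → R) (p q r : R) :
    Pv a0 a1 a2 b01 b02 b12 w (fun i => p * x i + q * y i + r * z i) =
      p * Pv a0 a1 a2 b01 b02 b12 w x + q * Pv a0 a1 a2 b01 b02 b12 w y +
        r * Pv a0 a1 a2 b01 b02 b12 w z := by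
  simp only [Pv]; ring

theorem Pv_right_add2 (w t x y : Fin 3 → R) (p q : R) :
    Pv a0 a1 a2 b01 b02 b12 w (fun i => t i + p * x i + q * y i) =
      Pv a0 a1 a2 b01 b02 b12 w t + p * Pv a0 a1 a2 b01 b02 b12 w x +
        q * Pv a0 a1 a2 b01 b02 b12 w y := by
  simp only [Pv]; ring

theorem det3_smul3rd (x y z : Fin 3 → R) (p q r : R) :
    det3 x y (fun i => p * x i + q * y i + r * z i) = r * det3 x y z := by
  simp only [det3]; ring

theorem det3_add2 (x y t : Fin 3 → R) (p q : R) :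
    det3 x y (fun i => t i + p * x i + q * y i) = det3 x y t := by
  simp only [det3]; ring

theorem det3_smul1 (x y z : Fin 3 → R) (c : R) :
    det3 x y (fun i => c * z i) = c * det3 x y z := by
  simp only [det3]; ring

set_option maxHeartbeats 1000000 in
/-- Invariance of the half-discriminant: for any triple of vectors, the half-discriminant of
the Gram data of the triple equals `det²` times the half-discriminant of the standard basis. -/
theorem DhT_eq (x y z : Fin 3 → R) :
    4 * Qv a0 a1 a2 b01 b02 b12 x * Qv a0 a1 a2 b01 b02 b12 y * Qv a0 a1 a2 b01 b02 b12 z +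
      Pv a0 a1 a2 b01 b02 b12 x y * Pv a0 a1 a2 b01 b02 b12 x z * Pv a0 a1 a2 b01 b02 b12 y z -
      (Qv a0 a1 a2 b01 b02 b12 x * Pv a0 a1 a2 b01 b02 b12 y z ^ 2 +
        Qv a0 a1 a2 b01 b02 b12 y * Pv a0 a1 a2 b01 b02 b12 x z ^ 2 +
        Qv a0 a1 a2 b01 b02 b12 z * Pv a0 a1 a2 b01 b02 b12 x y ^ 2) =
    det3 x y z ^ 2 * Dh a0 a1 a2 b01 b02 b12 := by
  simp only [Qv, Pv, det3, Dh]
  ring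

end AlgebraLemmas

section MapLemmas

variable {R' : Type*} [CommRing R'] (f : R →+* R') (a0 a1 a2 b01 b02 b12 : R)

theorem map_Qv (x : Fin 3 → R) :
    f (Qv a0 a1 a2 b01 b02 b12 x) =
      Qv (f a0) (f a1) (f a2) (f b01) (f b02) (f b12) (fun i => f (x i)) := by
  simp only [Qv, map_add, map_mul, map_pow]

theorem map_Pv (x y : Fin 3 → R) :
    f (Pv a0 a1 a2 b01 b02 b12 x y) =
      Pv (f a0) (f a1) (f a2) (f b01) (f b02) (f b12) (fun i => f (x i)) (fun i => f (y i)) := by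
  simp only [Pv, map_add, map_mul, map_ofNat]

theorem map_det3 (x y z : Fin 3 → R) :
    f (det3 x y z) = det3 (fun i => f (x i)) (fun i => f (y i)) (fun i => f (z i)) := by
  simp only [det3, map_add, _root_.map_sub, map_mul]

theorem map_Dh :
    f (Dh a0 a1 a2 b01 b02 b12) = Dh (f a0) (f a1) (f a2) (f b01) (f b02) (f b12) := by
  simp only [Dh, map_add, _root_.map_sub, map_mul, map_pow, map_ofNat]

theorem map_delta (x y : Fin 3 → R) :
    f (Pv a0 a1 a2 b01 b02 b12 x y ^ 2 - 4 * Qv a0 a1 a2 b01 b02 b12 x *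
        Qv a0 a1 a2 b01 b02 b12 y) =
      Pv (f a0) (f a1) (f a2) (f b01) (f b02) (f b12) (fun i => f (x i)) (fun i => f (y i)) ^ 2 -
        4 * Qv (f a0) (f a1) (f a2) (f b01) (f b02) (f b12) (fun i => f (x i)) *
          Qv (f a0) (f a1) (f a2) (f b01) (f b02) (f b12) (fun i => f (y i)) := by
  simp only [_root_.map_sub, map_pow, map_mul, map_ofNat, map_Qv, map_Pv]

end MapLemmas

section Semilocal

variable {S : Type*} [CommRing S]

theorem crt [Finite (MaximalSpectrum S)] (c : MaximalSpectrum S → S) :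
    ∃ s : S, ∀ m : MaximalSpectrum S,
      Ideal.Quotient.mk m.asIdeal s = Ideal.Quotient.mk m.asIdeal (c m) := by
  have hco : Pairwise fun m m' : MaximalSpectrum S => IsCoprime m.asIdeal m'.asIdeal := by
    intro m m' hne
    refine Ideal.isCoprime_iff_sup_eq.mpr (Ideal.IsMaximal.coprime_of_ne m.2 m'.2 fun h => hne ?_)
    cases m; cases m'; simpa using h
  obtain ⟨r, hr⟩ := Ideal.pi_quotient_surjective hco fun m => Ideal.Quotient.mk _ (c m)
  exact ⟨r, fun m => hr m⟩

theorem lift_scalar [Finite (MaximalSpectrum S)]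
    (c : (m : MaximalSpectrum S) → S ⧸ m.asIdeal) :
    ∃ s : S, ∀ m : MaximalSpectrum S, Ideal.Quotient.mk m.asIdeal s = c m := by
  choose d hd using fun m => Ideal.Quotient.mk_surjective (c m)
  obtain ⟨s, hs⟩ := crt d
  exact ⟨s, fun m => (hs m).trans (hd m)⟩

theorem lift_vec [Finite (MaximalSpectrum S)]
    (c : (m : MaximalSpectrum S) → Fin 3 → S ⧸ m.asIdeal) :
    ∃ x : Fin 3 → S, ∀ (m : MaximalSpectrum S) (i : Fin 3),
      Ideal.Quotient.mk m.asIdeal (x i) = c m i := by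
  have h : ∀ i : Fin 3, ∃ s : S, ∀ m : MaximalSpectrum S,
      Ideal.Quotient.mk m.asIdeal s = c m i := fun i => lift_scalar fun m => c m i
  choose x hx using h
  exact ⟨x, fun m i => hx i m⟩

theorem isUnit_of_res (s : S)
    (h : ∀ m : MaximalSpectrum S, Ideal.Quotient.mk m.asIdeal s ≠ 0) : IsUnit s := by
  by_contra hu
  obtain ⟨I, hI, hsI⟩ := exists_max_ideal_of_mem_nonunits hu
  exact h ⟨I, hI⟩ (Ideal.Quotient.eq_zero_iff_mem.mpr hsI)

theorem res_ne_zero {s : S} (hs : IsUnit s) (m : MaximalSpectrum S) :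
    Ideal.Quotient.mk m.asIdeal s ≠ 0 := by
  intro h0
  exact m.2.ne_top (m.asIdeal.eq_top_of_isUnit_mem (Ideal.Quotient.eq_zero_iff_mem.mp h0) hs)

end Semilocal

section FieldLemmas

variable {k : Type*} [Field k]

set_option maxHeartbeats 1000000 in
/-- Over a field, if the half-discriminant is nonzero, some pair of vectors spans a plane that is
nondegenerate for the polar form. -/
theorem exists_pair (a0 a1 a2 b01 b02 b12 : k)
    (hD : Dh a0 a1 a2 b01 b02 b12 ≠ 0) :
    ∃ u v : Fin 3 → k, Pv a0 a1 a2 b01 b02 b12 u v ^ 2 -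
      4 * Qv a0 a1 a2 b01 b02 b12 u * Qv a0 a1 a2 b01 b02 b12 v ≠ 0 := by
  by_contra hcon
  push_neg at hcon
  apply hD
  have h01' := hcon ![1,0,0] ![0,1,0]
  have h02' := hcon ![1,0,0] ![0,0,1]
  have h12' := hcon ![0,1,0] ![0,0,1]
  have h4' := hcon ![0,1,1] ![1,0,0]
  have h5' := hcon ![1,0,1] ![0,1,0]
  have h6' := hcon ![1,1,0] ![0,0,1]
  simp only [Qv, Pv, Matrix.cons_val_zero, Matrix.cons_val_one, Matrix.head_cons, Matrix.cons_val_two, Matrix.tail_cons] at h01' h02' h12' h4' h5' h6'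
  norm_num at h01' h02' h12' h4' h5' h6'
  have H01 : b01 ^ 2 - 4 * (a0 * a1) = 0 := by linear_combination h01'
  have H02 : b02 ^ 2 - 4 * (a0 * a2) = 0 := by linear_combination h02'
  have H12 : b12 ^ 2 - 4 * (a1 * a2) = 0 := by linear_combination h12'
  have H4 : (b01 + b02) ^ 2 - 4 * (a0 * (a1 + a2 + b12)) = 0 := by linear_combination h4'
  have H5 : (b01 + b12) ^ 2 - 4 * (a1 * (a0 + a2 + b02)) = 0 := by linear_combination h5'
  have H6 : (b02 + b12) ^ 2 - 4 * (a2 * (a0 + a1 + b01)) = 0 := by linear_combination h6'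
  by_cases h2 : (2 : k) = 0
  · have h4 : (4 : k) = 0 := by linear_combination 2 * h2
    have hb01 : b01 = 0 := by
      have : b01 ^ 2 = 0 := by linear_combination H01 + (a0 * a1) * h4
      exact (pow_eq_zero_iff (two_ne_zero)).mp this
    have hb02 : b02 = 0 := by
      have : b02 ^ 2 = 0 := by linear_combination H02 + (a0 * a2) * h4
      exact (pow_eq_zero_iff (two_ne_zero)).mp this
    have hb12 : b12 = 0 := by
      have : b12 ^ 2 = 0 := by linear_combination H12 + (a1 * a2) * h4
      exact (pow_eq_zero_iff (two_ne_zero)).mp this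
    simp only [Dh]
    linear_combination (a0 * a1 * a2) * h4 + (b02 * b12 - a2 * b01) * hb01 +
      (-(a1 * b02)) * hb02 + (-(a0 * b12)) * hb12
  · have h2Dh : 2 * Dh a0 a1 a2 b01 b02 b12 = 0 := by
      simp only [Dh]
      linear_combination b12 * H4 - b12 * H01 - b12 * H02 + 2 * a0 * H12 - 2 * a1 * H02 -
        2 * a2 * H01
    rcases mul_eq_zero.mp h2Dh with h | h
    · exact absurd h h2
    · exact h

/-- If the plane spanned by `u`, `v` is nondegenerate for the polar form, then `u`, `v` extend
to a basis: there is `t` with nonvanishing determinant. This is valid over any commutative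
ring, via an explicit Cauchy–Binet style certificate. -/
theorem exists_third (a0 a1 a2 b01 b02 b12 : k) (u v : Fin 3 → k)
    (hδ : Pv a0 a1 a2 b01 b02 b12 u v ^ 2 -
      4 * Qv a0 a1 a2 b01 b02 b12 u * Qv a0 a1 a2 b01 b02 b12 v ≠ 0) :
    ∃ t : Fin 3 → k, det3 u v t ≠ 0 := by
  by_contra hcon
  push_neg at hcon
  apply hδ
  have m12' := hcon ![1,0,0]
  have m02' := hcon ![0,1,0]
  have m01' := hcon ![0,0,1]
  simp only [det3, Matrix.cons_val_zero, Matrix.cons_val_one, Matrix.head_cons, Matrix.cons_val_two, Matrix.tail_cons] at m01' m02' m12'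
  norm_num at m01' m02' m12'
  have M01 : u 0 * v 1 - u 1 * v 0 = 0 := by linear_combination m01'
  have M02 : u 0 * v 2 - u 2 * v 0 = 0 := by linear_combination -m02'
  have M12 : u 1 * v 2 - u 2 * v 1 = 0 := by linear_combination m12'
  simp only [Qv, Pv]
  linear_combination
    (-((u 0 * v 1 - u 1 * v 0) * (4*a0*a1 - b01^2) + (u 0 * v 2 - u 2 * v 0) * (2*a0*b12 - b01*b02)
        + (u 1 * v 2 - u 2 * v 1) * (b01*b12 - 2*a1*b02))) * M01 +
    (-((u 0 * v 1 - u 1 * v 0) * (2*a0*b12 - b01*b02) + (u 0 * v 2 - u 2 * v 0) * (4*a0*a2 - b02^2)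
        + (u 1 * v 2 - u 2 * v 1) * (2*a2*b01 - b02*b12))) * M02 +
    (-((u 0 * v 1 - u 1 * v 0) * (b01*b12 - 2*a1*b02) + (u 0 * v 2 - u 2 * v 0) * (2*a2*b01 - b12*b02)
        + (u 1 * v 2 - u 2 * v 1) * (4*a1*a2 - b12^2))) * M12

end FieldLemmas

set_option maxHeartbeats 2000000 in
/-- The core construction: over a 2-perfect semilocal ring, Gram data with unit
half-discriminant admits a basis realizing the standard form `x₀x₁ + x₂²`. -/
theorem core {S : Type*} [CommRing S] [Finite (MaximalSpectrum S)]
    (hsq : ∀ s : S, ∃ t : S, t ^ 2 = s) (a0 a1 a2 b01 b02 b12 : S)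
    (hq : IsUnit (Dh a0 a1 a2 b01 b02 b12)) :
    ∃ u v w : Fin 3 → S, IsUnit (det3 u v w) ∧
      Qv a0 a1 a2 b01 b02 b12 u = 0 ∧ Qv a0 a1 a2 b01 b02 b12 v = 0 ∧
      Qv a0 a1 a2 b01 b02 b12 w = 1 ∧ Pv a0 a1 a2 b01 b02 b12 u v = 1 ∧
      Pv a0 a1 a2 b01 b02 b12 u w = 0 ∧ Pv a0 a1 a2 b01 b02 b12 v w = 0 := by
  classical
  -- Step 1: a pair spanning a polar-nondegenerate plane
  have key1 : ∀ m : MaximalSpectrum S, ∃ uu vv : Fin 3 → S ⧸ m.asIdeal,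
      Pv (Ideal.Quotient.mk m.asIdeal a0) (Ideal.Quotient.mk m.asIdeal a1)
          (Ideal.Quotient.mk m.asIdeal a2) (Ideal.Quotient.mk m.asIdeal b01)
          (Ideal.Quotient.mk m.asIdeal b02) (Ideal.Quotient.mk m.asIdeal b12) uu vv ^ 2 -
        4 * Qv (Ideal.Quotient.mk m.asIdeal a0) (Ideal.Quotient.mk m.asIdeal a1)
          (Ideal.Quotient.mk m.asIdeal a2) (Ideal.Quotient.mk m.asIdeal b01)
          (Ideal.Quotient.mk m.asIdeal b02) (Ideal.Quotient.mk m.asIdeal b12) uu *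
          Qv (Ideal.Quotient.mk m.asIdeal a0) (Ideal.Quotient.mk m.asIdeal a1)
          (Ideal.Quotient.mk m.asIdeal a2) (Ideal.Quotient.mk m.asIdeal b01)
          (Ideal.Quotient.mk m.asIdeal b02) (Ideal.Quotient.mk m.asIdeal b12) vv ≠ 0 := by
    intro m
    letI := Ideal.Quotient.field m.asIdeal
    apply exists_pair
    rw [← map_Dh]
    exact res_ne_zero hq m
  choose uu vv huv using key1
  obtain ⟨x, hx⟩ := lift_vec uu
  obtain ⟨y, hy⟩ := lift_vec vv
  have hδ : IsUnit (Pv a0 a1 a2 b01 b02 b12 x y ^ 2 -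
      4 * Qv a0 a1 a2 b01 b02 b12 x * Qv a0 a1 a2 b01 b02 b12 y) := by
    apply isUnit_of_res
    intro m
    rw [map_delta]
    rw [funext (hx m), funext (hy m)]
    exact huv m
  -- Step 2: complete to a basis
  have key2 : ∀ m : MaximalSpectrum S, ∃ tt : Fin 3 → S ⧸ m.asIdeal,
      det3 (fun i => Ideal.Quotient.mk m.asIdeal (x i))
        (fun i => Ideal.Quotient.mk m.asIdeal (y i)) tt ≠ 0 := by
    intro m
    letI := Ideal.Quotient.field m.asIdeal
    apply exists_third (Ideal.Quotient.mk m.asIdeal a0) (Ideal.Quotient.mk m.asIdeal a1)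
      (Ideal.Quotient.mk m.asIdeal a2) (Ideal.Quotient.mk m.asIdeal b01)
      (Ideal.Quotient.mk m.asIdeal b02) (Ideal.Quotient.mk m.asIdeal b12)
    rw [← map_delta]
    exact res_ne_zero hδ m
  choose tt htt using key2
  obtain ⟨z, hz⟩ := lift_vec tt
  have hdet1 : IsUnit (det3 x y z) := by
    apply isUnit_of_res
    intro m
    rw [map_det3, funext (hz m)]
    exact htt m
  -- Step 3: orthogonalize z against the plane
  obtain ⟨z', hz'⟩ : ∃ w : Fin 3 → S, w = fun i =>
      (2 * Qv a0 a1 a2 b01 b02 b12 y * Pv a0 a1 a2 b01 b02 b12 x z -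
        Pv a0 a1 a2 b01 b02 b12 x y * Pv a0 a1 a2 b01 b02 b12 y z) * x i +
      (2 * Qv a0 a1 a2 b01 b02 b12 x * Pv a0 a1 a2 b01 b02 b12 y z -
        Pv a0 a1 a2 b01 b02 b12 x y * Pv a0 a1 a2 b01 b02 b12 x z) * y i +
      (Pv a0 a1 a2 b01 b02 b12 x y ^ 2 -
        4 * Qv a0 a1 a2 b01 b02 b12 x * Qv a0 a1 a2 b01 b02 b12 y) * z i := ⟨_, rfl⟩
  have hpxz' : Pv a0 a1 a2 b01 b02 b12 x z' = 0 := by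
    rw [hz', Pv_right_smul3, Pv_self]
    ring
  have hpyz' : Pv a0 a1 a2 b01 b02 b12 y z' = 0 := by
    rw [hz', Pv_right_smul3, Pv_comm a0 a1 a2 b01 b02 b12 y x, Pv_self]
    ring
  have hdz' : IsUnit (det3 x y z') := by
    rw [hz', det3_smul3rd]
    exact hδ.mul hdet1
  have hC : IsUnit (Qv a0 a1 a2 b01 b02 b12 z') := by
    have h16 := DhT_eq a0 a1 a2 b01 b02 b12 x y z'
    rw [hpxz', hpyz'] at h16
    have hCe : Qv a0 a1 a2 b01 b02 b12 z' *
        (Pv a0 a1 a2 b01 b02 b12 x y ^ 2 -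
          4 * Qv a0 a1 a2 b01 b02 b12 x * Qv a0 a1 a2 b01 b02 b12 y) =
        -(det3 x y z' ^ 2 * Dh a0 a1 a2 b01 b02 b12) := by linear_combination -h16
    have : IsUnit (Qv a0 a1 a2 b01 b02 b12 z' *
        (Pv a0 a1 a2 b01 b02 b12 x y ^ 2 -
          4 * Qv a0 a1 a2 b01 b02 b12 x * Qv a0 a1 a2 b01 b02 b12 y)) := by
      rw [hCe]; exact ((hdz'.pow 2).mul hq).neg
    exact isUnit_of_mul_isUnit_left this
  -- Step 4: isotropic vector h0
  obtain ⟨C', hC'⟩ := hC.exists_right_inv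
  obtain ⟨γ, hγ⟩ := hsq (-(C' * Qv a0 a1 a2 b01 b02 b12 x))
  obtain ⟨h0, hh0⟩ : ∃ w : Fin 3 → S, w = fun i => x i + γ * z' i := ⟨_, rfl⟩
  have hQh0 : Qv a0 a1 a2 b01 b02 b12 h0 = 0 := by
    rw [hh0, Qv_addMul, hpxz']
    linear_combination Qv a0 a1 a2 b01 b02 b12 z' * hγ - Qv a0 a1 a2 b01 b02 b12 x * hC'
  have hp0x : Pv a0 a1 a2 b01 b02 b12 x h0 = 2 * Qv a0 a1 a2 b01 b02 b12 x := by
    rw [hh0, Pv_right_addMul, Pv_self, hpxz']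
    ring
  have hp0y : Pv a0 a1 a2 b01 b02 b12 y h0 = Pv a0 a1 a2 b01 b02 b12 x y := by
    rw [hh0, Pv_right_addMul, hpyz', Pv_comm a0 a1 a2 b01 b02 b12 y x]
    ring
  -- Step 5: a vector pairing to a unit with h0, then a hyperbolic partner h1
  have key5 : ∀ m : MaximalSpectrum S, ∃ l u : S,
      Ideal.Quotient.mk m.asIdeal
        (l * (2 * Qv a0 a1 a2 b01 b02 b12 x) + u * Pv a0 a1 a2 b01 b02 b12 x y) ≠ 0 := by
    intro m
    by_cases hb : Ideal.Quotient.mk m.asIdeal (Pv a0 a1 a2 b01 b02 b12 x y) = 0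
    · refine ⟨1, 0, fun h0' => res_ne_zero hδ m ?_⟩
      have h2A : Ideal.Quotient.mk m.asIdeal (2 * Qv a0 a1 a2 b01 b02 b12 x) = 0 := by
        simpa using h0'
      have : Pv a0 a1 a2 b01 b02 b12 x y ^ 2 -
          4 * Qv a0 a1 a2 b01 b02 b12 x * Qv a0 a1 a2 b01 b02 b12 y =
          Pv a0 a1 a2 b01 b02 b12 x y * Pv a0 a1 a2 b01 b02 b12 x y -
            (2 * Qv a0 a1 a2 b01 b02 b12 x) * (2 * Qv a0 a1 a2 b01 b02 b12 y) := by ring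
      rw [this, _root_.map_sub, map_mul, map_mul, hb, h2A]
      ring
    · exact ⟨0, 1, by simpa using hb⟩
  choose lm um hlu using key5
  obtain ⟨l, hl⟩ := crt lm
  obtain ⟨u, hu⟩ := crt um
  have hu1 : IsUnit (l * (2 * Qv a0 a1 a2 b01 b02 b12 x) + u * Pv a0 a1 a2 b01 b02 b12 x y) := by
    apply isUnit_of_res
    intro m
    have e : Ideal.Quotient.mk m.asIdeal
        (l * (2 * Qv a0 a1 a2 b01 b02 b12 x) + u * Pv a0 a1 a2 b01 b02 b12 x y) =
        Ideal.Quotient.mk m.asIdeal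
        (lm m * (2 * Qv a0 a1 a2 b01 b02 b12 x) + um m * Pv a0 a1 a2 b01 b02 b12 x y) := by
      simp only [map_add, map_mul, hl m, hu m]
    rw [e]
    exact hlu m
  obtain ⟨u1', hu1'⟩ := hu1.exists_right_inv
  obtain ⟨h1', hh1'⟩ : ∃ w : Fin 3 → S, w = fun i => (u1' * l) * x i + (u1' * u) * y i := ⟨_, rfl⟩
  have hp0h1' : Pv a0 a1 a2 b01 b02 b12 h0 h1' = 1 := by
    rw [hh1', Pv_right_smul2, Pv_comm a0 a1 a2 b01 b02 b12 h0 x, hp0x,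
      Pv_comm a0 a1 a2 b01 b02 b12 h0 y, hp0y]
    linear_combination hu1'
  obtain ⟨h1, hh1⟩ : ∃ w : Fin 3 → S,
      w = fun i => h1' i + (-(Qv a0 a1 a2 b01 b02 b12 h1')) * h0 i := ⟨_, rfl⟩
  have hQh1 : Qv a0 a1 a2 b01 b02 b12 h1 = 0 := by
    rw [hh1, Qv_addMul, hQh0, Pv_comm a0 a1 a2 b01 b02 b12 h1' h0, hp0h1']
    ring
  have hp01 : Pv a0 a1 a2 b01 b02 b12 h0 h1 = 1 := by
    rw [hh1, Pv_right_addMul, hp0h1', Pv_self, hQh0]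
    ring
  have hδ2 : Pv a0 a1 a2 b01 b02 b12 h0 h1 ^ 2 -
      4 * Qv a0 a1 a2 b01 b02 b12 h0 * Qv a0 a1 a2 b01 b02 b12 h1 = 1 := by
    rw [hp01, hQh0, hQh1]
    ring
  -- Step 6: complete the hyperbolic pair to a basis and split off the complement
  have key6 : ∀ m : MaximalSpectrum S, ∃ tt2 : Fin 3 → S ⧸ m.asIdeal,
      det3 (fun i => Ideal.Quotient.mk m.asIdeal (h0 i))
        (fun i => Ideal.Quotient.mk m.asIdeal (h1 i)) tt2 ≠ 0 := by
    intro m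
    letI := Ideal.Quotient.field m.asIdeal
    apply exists_third (Ideal.Quotient.mk m.asIdeal a0) (Ideal.Quotient.mk m.asIdeal a1)
      (Ideal.Quotient.mk m.asIdeal a2) (Ideal.Quotient.mk m.asIdeal b01)
      (Ideal.Quotient.mk m.asIdeal b02) (Ideal.Quotient.mk m.asIdeal b12)
    rw [← map_delta, hδ2, map_one]
    exact one_ne_zero
  choose tt2 htt2 using key6
  obtain ⟨t, ht⟩ := lift_vec tt2
  have hdet2 : IsUnit (det3 h0 h1 t) := by
    apply isUnit_of_res
    intro m
    rw [map_det3, funext (ht m)]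
    exact htt2 m
  obtain ⟨f2', hf2'⟩ : ∃ w : Fin 3 → S, w = fun i =>
      t i + (-(Pv a0 a1 a2 b01 b02 b12 h1 t)) * h0 i +
        (-(Pv a0 a1 a2 b01 b02 b12 h0 t)) * h1 i := ⟨_, rfl⟩
  have hp0f2' : Pv a0 a1 a2 b01 b02 b12 h0 f2' = 0 := by
    rw [hf2', Pv_right_add2, Pv_self, hQh0, hp01]
    ring
  have hp1f2' : Pv a0 a1 a2 b01 b02 b12 h1 f2' = 0 := by
    rw [hf2', Pv_right_add2, Pv_comm a0 a1 a2 b01 b02 b12 h1 h0, hp01, Pv_self, hQh1]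
    ring
  have hdf2' : det3 h0 h1 f2' = det3 h0 h1 t := by
    rw [hf2', det3_add2]
  have hW : IsUnit (Qv a0 a1 a2 b01 b02 b12 f2') := by
    have h16 := DhT_eq a0 a1 a2 b01 b02 b12 h0 h1 f2'
    rw [hQh0, hQh1, hp01, hp0f2', hp1f2'] at h16
    have hWe : Qv a0 a1 a2 b01 b02 b12 f2' =
        -(det3 h0 h1 f2' ^ 2 * Dh a0 a1 a2 b01 b02 b12) := by linear_combination -h16
    rw [hWe, hdf2']
    exact ((hdet2.pow 2).mul hq).neg
  -- Step 7: normalize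
  obtain ⟨W', hW'⟩ := hW.exists_right_inv
  obtain ⟨r, hr⟩ := hsq W'
  have hrunit : IsUnit r := by
    have hWu : IsUnit W' := IsUnit.of_mul_eq_one (a := W') (Qv a0 a1 a2 b01 b02 b12 f2')
      (by rw [mul_comm]; exact hW')
    have : IsUnit (r * r) := by rw [← pow_two, hr]; exact hWu
    exact isUnit_of_mul_isUnit_left this
  obtain ⟨f2, hf2⟩ : ∃ w : Fin 3 → S, w = fun i => r * f2' i := ⟨_, rfl⟩
  have hQf2 : Qv a0 a1 a2 b01 b02 b12 f2 = 1 := by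
    rw [hf2, Qv_smul1]
    linear_combination Qv a0 a1 a2 b01 b02 b12 f2' * hr + hW'
  have hp0f2 : Pv a0 a1 a2 b01 b02 b12 h0 f2 = 0 := by
    rw [hf2, Pv_right_smul1, hp0f2']
    ring
  have hp1f2 : Pv a0 a1 a2 b01 b02 b12 h1 f2 = 0 := by
    rw [hf2, Pv_right_smul1, hp1f2']
    ring
  have hdetf : IsUnit (det3 h0 h1 f2) := by
    rw [hf2, det3_smul1, hdf2']
    exact hrunit.mul hdet2
  exact ⟨h0, h1, f2, hdetf, hQh0, hQh1, hQf2, hp01, hp0f2, hp1f2⟩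

theorem q_triple {S : Type*} [CommRing S] (Q : QuadraticForm S (Fin 3 → S)) (p r s : S)
    (X Y Z : Fin 3 → S) :
    Q (p • X + r • Y + s • Z) = p ^ 2 * Q X + r ^ 2 * Q Y + s ^ 2 * Q Z
      + p * r * polar (⇑Q) X Y + p * s * polar (⇑Q) X Z + r * s * polar (⇑Q) Y Z := by
  rw [QuadraticMap.map_add (⇑Q) (p • X + r • Y) (s • Z),
    QuadraticMap.map_add (⇑Q) (p • X) (r • Y), polar_add_left]
  simp only [polar_smul_left, polar_smul_right, QuadraticMap.map_smul, smul_eq_mul]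
  ring

end SemiregAux

open SemiregAux in
set_option maxHeartbeats 1000000 in
/-- Over a 2-perfect semilocal commutative ring `S`, any semiregular ternary quadratic form
on `S³` is isometric to the standard form `x₁x₂ + x₃²`: there is `g ∈ GL(V)` with
`q ∘ g⁻¹ = q¹`. -/
theorem semiregular_isometric_standard {S : Type*} [CommRing S]
    [Finite (MaximalSpectrum S)] (hsq : ∀ s : S, ∃ t : S, t ^ 2 = s)
    (q : QuadraticForm S (Fin 3 → S))
    (hq : IsUnit (halfDisc q fun i => Pi.single i 1)) :
    ∃ g : (Fin 3 → S) ≃ₗ[S] (Fin 3 → S),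
      ∀ v : Fin 3 → S, q (g.symm v) = v 0 * v 1 + v 2 ^ 2 := by
  classical
  obtain ⟨a0, ha0⟩ : ∃ c, q (Pi.single (0 : Fin 3) (1 : S)) = c := ⟨_, rfl⟩
  obtain ⟨a1, ha1⟩ : ∃ c, q (Pi.single (1 : Fin 3) (1 : S)) = c := ⟨_, rfl⟩
  obtain ⟨a2, ha2⟩ : ∃ c, q (Pi.single (2 : Fin 3) (1 : S)) = c := ⟨_, rfl⟩
  obtain ⟨b01, hb01⟩ : ∃ c, polar (⇑q) (Pi.single (0 : Fin 3) (1 : S))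
    (Pi.single (1 : Fin 3) (1 : S)) = c := ⟨_, rfl⟩
  obtain ⟨b02, hb02⟩ : ∃ c, polar (⇑q) (Pi.single (0 : Fin 3) (1 : S))
    (Pi.single (2 : Fin 3) (1 : S)) = c := ⟨_, rfl⟩
  obtain ⟨b12, hb12⟩ : ∃ c, polar (⇑q) (Pi.single (1 : Fin 3) (1 : S))
    (Pi.single (2 : Fin 3) (1 : S)) = c := ⟨_, rfl⟩
  have hq' : IsUnit (Dh a0 a1 a2 b01 b02 b12) := by
    have hd : halfDisc q (fun i => Pi.single i 1) = Dh a0 a1 a2 b01 b02 b12 := by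
      simp only [halfDisc, Dh]
      rw [ha0, ha1, ha2, hb01, hb02, hb12]
    rwa [hd] at hq
  have E1 : ∀ wv : Fin 3 → S, q wv = Qv a0 a1 a2 b01 b02 b12 wv := by
    intro wv
    have hw : wv = wv 0 • (Pi.single 0 1 : Fin 3 → S) + wv 1 • (Pi.single 1 1 : Fin 3 → S)
        + wv 2 • (Pi.single 2 1 : Fin 3 → S) := by
      funext j
      fin_cases j <;> simp [Pi.single_apply]
    conv_lhs => rw [hw]
    rw [q_triple, ha0, ha1, ha2, hb01, hb02, hb12]
    simp only [Qv]
    ring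
  obtain ⟨u, v, w, hdet, hQu, hQv, hQw, hPuv, hPuw, hPvw⟩ :=
    core hsq a0 a1 a2 b01 b02 b12 hq'
  set M : Matrix (Fin 3) (Fin 3) S := Matrix.of fun i j => ![u, v, w] j i with hM
  have hdetM : IsUnit M.det := by
    have : M.det = det3 u v w := by
      rw [Matrix.det_fin_three]
      simp only [hM, Matrix.of_apply, Matrix.cons_val_zero, Matrix.cons_val_one,
        Matrix.head_cons, Matrix.cons_val_two, Matrix.tail_cons, det3]
      ring
    rw [this]
    exact hdet
  letI hInv := M.invertibleOfIsUnitDet hdetM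
  refine ⟨(M.toLinearEquiv' hInv).symm, fun vv => ?_⟩
  rw [LinearEquiv.symm_symm]
  have happ : (M.toLinearEquiv' hInv) vv = M.mulVec vv := rfl
  rw [happ]
  have hmv : M.mulVec vv = fun i => vv 0 * u i + vv 1 * v i + vv 2 * w i := by
    funext i
    simp only [hM, Matrix.mulVec, dotProduct, Fin.sum_univ_three, Matrix.of_apply,
      Matrix.cons_val_zero, Matrix.cons_val_one, Matrix.head_cons, Matrix.cons_val_two,
      Matrix.tail_cons]
    ring
  rw [hmv, E1, Qv_smul3, hQu, hQv, hQw, hPuv, hPuw, hPvw]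
  ring
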